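/- For x ≥ 0, the function h(c) = (K−1) / Σ_{n=0}^∞ c^n / ∏_{m=0}^n (x+c+m) (with K ≥ 2 an integer) satisfies h(c) ≤ (K−1) / Σ_{n=0}^{K−1} c^n/∏_{m=0}^n (x+c+m), and consequently h(c) < c for all sufficiently large c; hence any sequence c_{k+1} = h(c_k) with c_0 > 0 is bounded. -/

import Mathlib

open Real Filter

private noncomputable def Faux (x c : ℝ) (n : ℕ) : ℝ :=
  c ^ n / ∏ m ∈ Finset.range (n + 1), (x + c + m)

private lemma Faux_nonneg {x c : ℝ} (hx : 0 ≤ x) (hc : 0 ≤ c) (n : ℕ) : 0 ≤ Faux x c n := by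
  apply div_nonneg (pow_nonneg hc n)
  exact Finset.prod_nonneg fun m _ => by positivity

private lemma Faux_pos {x c : ℝ} (hx : 0 ≤ x) (hc : 0 < c) (n : ℕ) : 0 < Faux x c n := by
  apply div_pos (pow_pos hc n)
  exact Finset.prod_pos fun m _ => by positivity

/-- truncation bound -/
private lemma part1 {x : ℝ} (hx : 0 ≤ x) {K : ℕ} (hK : 2 ≤ K) {c : ℝ} (hc : 0 < c) :
    ((K : ℝ) - 1) / ∑' n, Faux x c n ≤ ((K : ℝ) - 1) / ∑ n ∈ Finset.range K, Faux x c n := by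
  have hK1 : (0:ℝ) ≤ (K:ℝ) - 1 := by
    have : (2:ℝ) ≤ K := by exact_mod_cast hK
    linarith
  have hpartial : 0 < ∑ n ∈ Finset.range K, Faux x c n :=
    Finset.sum_pos (fun n _ => Faux_pos hx hc n) ⟨0, Finset.mem_range.mpr (by omega)⟩
  by_cases hs : Summable (Faux x c)
  · exact div_le_div_of_nonneg_left hK1 hpartial
      (hs.sum_le_tsum _ (fun n _ => Faux_nonneg hx hc.le n))
  · rw [tsum_eq_zero_of_not_summable hs, div_zero]
    positivity

/-- upper bound h c ≤ (K-1)(x+c) for c ≥ 0 -/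
private lemma hub {x : ℝ} (hx : 0 ≤ x) {K : ℕ} (hK : 2 ≤ K) {c : ℝ} (hc : 0 ≤ c) :
    ((K : ℝ) - 1) / ∑' n, Faux x c n ≤ ((K : ℝ) - 1) * (x + c) := by
  have hK1 : (0:ℝ) ≤ (K:ℝ) - 1 := by
    have : (2:ℝ) ≤ K := by exact_mod_cast hK
    linarith
  rcases eq_or_lt_of_le (by positivity : (0:ℝ) ≤ x + c) with heq | hpos
  · have hall : ∀ n, Faux x c n = 0 := by
      intro n
      have : ∏ m ∈ Finset.range (n + 1), (x + c + m) = 0 :=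
        Finset.prod_eq_zero (Finset.mem_range.mpr n.succ_pos)
          (by simp [← heq])
      simp [Faux, this]
    rw [tsum_congr hall, tsum_zero, div_zero]
    positivity
  · by_cases hs : Summable (Faux x c)
    · have h0 : Faux x c 0 = 1 / (x + c) := by simp [Faux]
      have hle : 1 / (x + c) ≤ ∑' n, Faux x c n := by
        rw [← h0]; exact hs.le_tsum 0 (fun j _ => Faux_nonneg hx hc j)
      calc ((K : ℝ) - 1) / ∑' n, Faux x c n
          ≤ ((K : ℝ) - 1) / (1 / (x + c)) :=
            div_le_div_of_nonneg_left hK1 (by positivity) hle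
        _ = ((K : ℝ) - 1) * (x + c) := by
            rw [div_div_eq_mul_div, div_one]
    · rw [tsum_eq_zero_of_not_summable hs, div_zero]
      positivity

private lemma hnonneg {x : ℝ} (hx : 0 ≤ x) {K : ℕ} (hK : 2 ≤ K) {c : ℝ} (hc : 0 ≤ c) :
    0 ≤ ((K : ℝ) - 1) / ∑' n, Faux x c n := by
  have hK1 : (0:ℝ) ≤ (K:ℝ) - 1 := by
    have : (2:ℝ) ≤ K := by exact_mod_cast hK
    linarith
  exact div_nonneg hK1 (tsum_nonneg (fun n => Faux_nonneg hx hc n))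

private lemma factor_tendsto {x : ℝ} (hx : 0 ≤ x) (m : ℕ) :
    Tendsto (fun c : ℝ => c / (x + c + m)) atTop (nhds 1) := by
  have hd : Tendsto (fun c : ℝ => x + c + m) atTop atTop :=
    tendsto_atTop_add_const_right _ _ (tendsto_atTop_add_const_left _ _ tendsto_id)
  have h1 : Tendsto (fun c : ℝ => 1 - (x + m) / (x + c + m)) atTop (nhds 1) := by
    have := (tendsto_const_nhds (x := (x + (m:ℝ))) (f := atTop)).div_atTop hd
    simpa using (tendsto_const_nhds (x := (1:ℝ))).sub this
  refine h1.congr' ?_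
  filter_upwards [eventually_gt_atTop (0:ℝ)] with c hc
  have hd0 : (0:ℝ) < x + c + m := by positivity
  field_simp
  ring

private lemma mul_partial_tendsto {x : ℝ} (hx : 0 ≤ x) (K : ℕ) :
    Tendsto (fun c : ℝ => c * ∑ n ∈ Finset.range K, Faux x c n) atTop (nhds K) := by
  have hterm : ∀ n : ℕ, Tendsto (fun c : ℝ => c * Faux x c n) atTop (nhds 1) := by
    intro n
    have hp : Tendsto (fun c : ℝ => ∏ m ∈ Finset.range (n + 1), (c / (x + c + m)))
        atTop (nhds (∏ _m ∈ Finset.range (n + 1), (1:ℝ))) :=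
      tendsto_finset_prod _ (fun m _ => factor_tendsto hx m)
    rw [Finset.prod_const_one] at hp
    refine hp.congr fun c => ?_
    rw [Finset.prod_div_distrib, Finset.prod_const, Finset.card_range, Faux,
      mul_div_assoc', ← pow_succ']
  have := tendsto_finset_sum (Finset.range K) (fun n (_ : n ∈ Finset.range K) => hterm n)
  rw [Finset.sum_const, Finset.card_range, nsmul_eq_mul, mul_one] at this
  refine this.congr fun c => ?_
  rw [Finset.mul_sum]

/-- For `x ≥ 0` and integer `K ≥ 2`, the function
`h(c) = (K−1)/Σ_{n=0}^∞ c^n/∏_{m=0}^n (x+c+m)` satisfies the truncation bound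
`h(c) ≤ (K−1)/Σ_{n=0}^{K−1} c^n/∏_{m=0}^n (x+c+m)`, hence `h(c) < c` for all sufficiently
large `c`, and any sequence `c_{k+1} = h(c_k)` with `c₀ > 0` is bounded. -/
theorem stmt15 (x : ℝ) (hx : 0 ≤ x) (K : ℕ) (hK : 2 ≤ K) :
    let h : ℝ → ℝ := fun c =>
      ((K : ℝ) - 1) / ∑' n : ℕ, c ^ n / ∏ m ∈ Finset.range (n + 1), (x + c + m)
    (∀ c : ℝ, 0 < c →
      h c ≤ ((K : ℝ) - 1) /
        ∑ n ∈ Finset.range K, c ^ n / ∏ m ∈ Finset.range (n + 1), (x + c + m)) ∧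
    (∃ C : ℝ, ∀ c : ℝ, C ≤ c → h c < c) ∧
    (∀ c₀ : ℝ, 0 < c₀ → ∀ seq : ℕ → ℝ, seq 0 = c₀ → (∀ k, seq (k + 1) = h (seq k)) →
      ∃ M : ℝ, ∀ k, seq k ≤ M) := by
  intro h
  have hdef : ∀ c, h c = ((K : ℝ) - 1) / ∑' n, Faux x c n := fun c => rfl
  have hK1 : (0:ℝ) ≤ (K:ℝ) - 1 := by
    have : (2:ℝ) ≤ K := by exact_mod_cast hK
    linarith
  -- Part 2 witness
  have hev : ∀ᶠ c in atTop, ((K:ℝ) - 1) < c * ∑ n ∈ Finset.range K, Faux x c n :=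
    (mul_partial_tendsto hx K).eventually_const_lt (by linarith)
  obtain ⟨C₀, hC₀⟩ := (hev.and (eventually_gt_atTop (0:ℝ))).exists_forall_of_atTop
  have hpart2 : ∀ c : ℝ, max C₀ 1 ≤ c → h c < c := by
    intro c hc
    have hc0 : (0:ℝ) < c := lt_of_lt_of_le one_pos (le_trans (le_max_right _ _) hc)
    obtain ⟨h1, _⟩ := hC₀ c (le_trans (le_max_left _ _) hc)
    have hPpos : 0 < ∑ n ∈ Finset.range K, Faux x c n :=
      Finset.sum_pos (fun n _ => Faux_pos hx hc0 n) ⟨0, Finset.mem_range.mpr (by omega)⟩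
    have hlt : ((K:ℝ) - 1) / ∑ n ∈ Finset.range K, Faux x c n < c := by
      rw [div_lt_iff₀ hPpos]
      linarith [mul_comm c (∑ n ∈ Finset.range K, Faux x c n)]
    calc h c ≤ ((K:ℝ) - 1) / ∑ n ∈ Finset.range K, Faux x c n := by
          rw [hdef]; exact part1 hx hK hc0
      _ < c := hlt
  refine ⟨fun c hc => by rw [hdef]; exact part1 hx hK hc, ⟨max C₀ 1, hpart2⟩, ?_⟩
  -- Part 3
  intro c₀ hc₀ seq hseq0 hseqs
  set C' : ℝ := max (max C₀ 1) 0 with hC'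
  refine ⟨max c₀ (max C' (((K:ℝ) - 1) * (x + C'))), fun k => ?_⟩
  have key : ∀ k, 0 ≤ seq k ∧ seq k ≤ max c₀ (max C' (((K:ℝ) - 1) * (x + C'))) := by
    intro k
    induction k with
    | zero => exact ⟨by rw [hseq0]; exact hc₀.le, by rw [hseq0]; exact le_max_left _ _⟩
    | succ k ih =>
      obtain ⟨hpos, hbd⟩ := ih
      rw [hseqs k]
      constructor
      · rw [hdef]; exact hnonneg hx hK hpos
      · by_cases hcase : C' ≤ seq k
        · have := hpart2 (seq k) (le_trans (le_max_left _ _) hcase)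
          exact le_trans this.le hbd
        · push_neg at hcase
          have h1 : h (seq k) ≤ ((K:ℝ) - 1) * (x + seq k) := by
            rw [hdef]; exact hub hx hK hpos
          have h2 : ((K:ℝ) - 1) * (x + seq k) ≤ ((K:ℝ) - 1) * (x + C') :=
            mul_le_mul_of_nonneg_left (by linarith) hK1
          exact le_trans (le_trans h1 h2)
            (le_trans (le_max_right _ _) (le_max_right _ _))
  exact (key k).2
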